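/- Let ν₁,...,ν_l be the distinct constant principal curvatures, with multiplicities m_i, of an isoparametric hypersurface in a Riemannian space form of curvature κ = c/ϱ², and set ν_i = (1/√2)(2λ_i + ψ) with ψ = √2 ϱ'/ϱ. If the classical Cartan identities ∑_{j≠i} m_j (κ + ν_iν_j)/(ν_i − ν_j) = 0 hold for each i, and (c + (ϱ')²)/ϱ² = c̄, then ∑_{j≠i} m_j (c̄ + 2λ_iλ_j + ψ(λ_i + λ_j))/(λ_i − λ_j) = 0 for each i. -/

import Mathlib

/-- Algebraic content of Theorem 4.3: the classical Cartan identities for the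
slice principal curvatures ν_i = (1/√2)(2λ_i + ψ) in a space form of
curvature κ = c/ϱ², together with (c + (ϱ')²)/ϱ² = c̄ and ψ = √2 ϱ'/ϱ, yield
the Cartan identities for the screen principal curvatures λ_i. -/
theorem stmt16 (l : ℕ) (lam nu : Fin l → ℝ) (m : Fin l → ℕ)
    (hdist : Function.Injective lam) (hm : ∀ i, 0 < m i)
    (r r' c cbar psi : ℝ) (hr : 0 < r)
    (hpsi : psi = Real.sqrt 2 * (r' / r))
    (hnu : ∀ i, nu i = (1 / Real.sqrt 2) * (2 * lam i + psi))
    (hcurv : (c + r' ^ 2) / r ^ 2 = cbar)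
    (hcartan : ∀ i : Fin l, ∑ j ∈ Finset.univ.erase i,
      (m j : ℝ) * (c / r ^ 2 + nu i * nu j) / (nu i - nu j) = 0) :
    ∀ i : Fin l, ∑ j ∈ Finset.univ.erase i,
      (m j : ℝ) * (cbar + 2 * lam i * lam j + psi * (lam i + lam j)) /
        (lam i - lam j) = 0 := by
  intro i
  set s := Real.sqrt 2 with hs
  have hs2 : s * s = 2 := Real.mul_self_sqrt (by norm_num)
  have hs0 : s ≠ 0 := by positivity
  have hr0 : r ≠ 0 := ne_of_gt hr
  have hcb : cbar = c / r ^ 2 + psi ^ 2 / 2 := by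
    rw [← hcurv, hpsi]
    field_simp
    ring_nf
    simp only [show s ^ 2 = 2 from by rw [sq]; exact hs2,
      show s ^ 4 = 4 from by rw [show s ^ 4 = s * s * (s * s) by ring, hs2]; norm_num]
    try ring
  have heq : ∀ j ∈ Finset.univ.erase i,
      (m j : ℝ) * (cbar + 2 * lam i * lam j + psi * (lam i + lam j)) / (lam i - lam j)
      = s * ((m j : ℝ) * (c / r ^ 2 + nu i * nu j) / (nu i - nu j)) := by
    intro j hj
    have hji : lam i ≠ lam j := fun h => (Finset.mem_erase.mp hj).1 (hdist h.symm)
    have hd : lam i - lam j ≠ 0 := sub_ne_zero.mpr hji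
    rw [hnu i, hnu j, hcb]
    have hden : 1 / s * (2 * lam i + psi) - 1 / s * (2 * lam j + psi)
        = 2 / s * (lam i - lam j) := by field_simp; ring
    rw [hden]
    field_simp
    ring_nf
    simp only [show s ^ 2 = 2 from by rw [sq]; exact hs2,
      show s ^ 4 = 4 from by rw [show s ^ 4 = s * s * (s * s) by ring, hs2]; norm_num]
    try ring
  rw [Finset.sum_congr rfl heq, ← Finset.mul_sum, hcartan i, mul_zero]
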